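/- Linear pruning of good contexts: if C⟨[vₘ→m]D⟩ is a good context (where vₘ is a multiplicative value and the displayed cut is on a multiplicative variable m), then C⟨D⟩ is a good context. -/
import Mathlib


/-- Variables of the ESC: multiplicative or exponential, indexed by names. -/
inductive EVar where
  | mul : ℕ → EVar
  | exp : ℕ → EVar
deriving DecidableEq

/-- ESC terms: variables, abstractions `λx.t`, promotions `!t`,
cuts `[v→x]t`, subtractions `[m▷v,x]t`, derelictions `[e?x]t`. -/
inductive Term where
  | var : EVar → Term
  | lam : EVar → Term → Term
  | bang : Term → Term
  | cut : Term → EVar → Term → Term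
  | sub : EVar → Term → EVar → Term → Term
  | der : EVar → EVar → Term → Term
deriving DecidableEq

namespace Term

def IsValue : Term → Prop
  | var _ => True
  | lam _ _ => True
  | bang _ => True
  | _ => False

/-- Free variables. -/
def fv : Term → Finset EVar
  | var x => {x}
  | lam x t => fv t \ {x}
  | bang t => fv t
  | cut v x t => fv v ∪ (fv t \ {x})
  | sub m v x t => insert m (fv v ∪ (fv t \ {x}))
  | der e x t => insert e (fv t \ {x})

/-- Out variables: variables with at least one occurrence outside all cut values. -/
def ov : Term → Finset EVar
  | var x => {x}
  | lam x t => ov t \ {x}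
  | bang t => ov t
  | cut _ x t => ov t \ {x}
  | sub m v x t => insert m (ov v ∪ (ov t \ {x}))
  | der e x t => insert e (ov t \ {x})

/-- A term is cut-free if it has no cut subterm. -/
def CutFree : Term → Prop
  | var _ => True
  | lam _ t => CutFree t
  | bang t => CutFree t
  | cut _ _ _ => False
  | sub _ v _ t => CutFree v ∧ CutFree t
  | der _ _ t => CutFree t

/-- Cut-freeness up to garbage: for every out cut `[v→x]s`, `x ∉ ov s`. -/
def CutFreeUpToGarbage : Term → Prop
  | var _ => True
  | lam _ t => CutFreeUpToGarbage t
  | bang t => CutFreeUpToGarbage t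
  | cut _ x t => x ∉ ov t ∧ CutFreeUpToGarbage t
  | sub _ v _ t => CutFreeUpToGarbage v ∧ CutFreeUpToGarbage t
  | der _ _ t => CutFreeUpToGarbage t

/-- Number of out cuts (cuts not contained in the value of another cut). -/
def numOutCuts : Term → ℕ
  | var _ => 0
  | lam _ t => numOutCuts t
  | bang t => numOutCuts t
  | cut _ _ t => numOutCuts t + 1
  | sub _ v _ t => numOutCuts v + numOutCuts t
  | der _ _ t => numOutCuts t

/-- The garbage collection function, erasing every cut. -/
def gc : Term → Term
  | var x => var x
  | lam x t => lam x (gc t)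
  | bang t => bang (gc t)
  | cut _ _ t => gc t
  | sub m v x t => sub m (gc v) x (gc t)
  | der e x t => der e x (gc t)

end Term

/-- One-hole contexts for ESC terms. -/
inductive Ctx where
  | hole : Ctx
  | lam : EVar → Ctx → Ctx
  | bang : Ctx → Ctx
  | cutT : Ctx → EVar → Term → Ctx      -- hole inside the cut value: [C→x]t
  | cutC : Term → EVar → Ctx → Ctx      -- [v→x]C
  | subV : EVar → Ctx → EVar → Term → Ctx  -- [m▷C,x]t
  | subC : EVar → Term → EVar → Ctx → Ctx  -- [m▷v,x]C
  | der : EVar → EVar → Ctx → Ctx          -- [e?x]C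

/-- Plugging a term in a context. -/
def plug : Ctx → Term → Term
  | Ctx.hole, s => s
  | Ctx.lam x C, s => Term.lam x (plug C s)
  | Ctx.bang C, s => Term.bang (plug C s)
  | Ctx.cutT C x t, s => Term.cut (plug C s) x t
  | Ctx.cutC v x C, s => Term.cut v x (plug C s)
  | Ctx.subV m C x t, s => Term.sub m (plug C s) x t
  | Ctx.subC m v x C, s => Term.sub m v x (plug C s)
  | Ctx.der e x C, s => Term.der e x (plug C s)

/-- Dominating free variables of a context. -/
def dfv : Ctx → Finset EVar
  | Ctx.hole => ∅
  | Ctx.lam x C => dfv C \ {x}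
  | Ctx.bang C => dfv C
  | Ctx.cutT C _ _ => dfv C
  | Ctx.cutC _ x C => dfv C \ {x}
  | Ctx.subV m C _ _ => insert m (dfv C)
  | Ctx.subC m _ x C => if x ∈ dfv C then insert m (dfv C \ {x}) else dfv C
  | Ctx.der e x C => if x ∈ dfv C then insert e (dfv C \ {x}) else dfv C

mutual
  /-- Good value contexts `V_G ::= ⟨·⟩ | λx.G | !G`. -/
  inductive GoodV : Ctx → Prop
    | hole : GoodV Ctx.hole
    | lam (x : EVar) {C : Ctx} : Good C → GoodV (Ctx.lam x C)
    | bang {C : Ctx} : Good C → GoodV (Ctx.bang C)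

  /-- Good contexts
  `G ::= V_G | [m▷v,x]G | [m▷V_G,x]t | [e?x]G | [v→x]G (x ∉ dfv G)`. -/
  inductive Good : Ctx → Prop
    | val {C : Ctx} : GoodV C → Good C
    | subC (m : EVar) (v : Term) (x : EVar) {C : Ctx} :
        Good C → Good (Ctx.subC m v x C)
    | subV (m : EVar) {C : Ctx} (x : EVar) (t : Term) :
        GoodV C → Good (Ctx.subV m C x t)
    | der (e x : EVar) {C : Ctx} : Good C → Good (Ctx.der e x C)
    | cutC (v : Term) (x : EVar) {C : Ctx} :
        Good C → x ∉ dfv C → Good (Ctx.cutC v x C)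
end


/-- Composition of contexts: plug the second context in the hole of the first. -/
def comp : Ctx → Ctx → Ctx
  | Ctx.hole, D => D
  | Ctx.lam x C, D => Ctx.lam x (comp C D)
  | Ctx.bang C, D => Ctx.bang (comp C D)
  | Ctx.cutT C x t, D => Ctx.cutT (comp C D) x t
  | Ctx.cutC v x C, D => Ctx.cutC v x (comp C D)
  | Ctx.subV m C x t, D => Ctx.subV m (comp C D) x t
  | Ctx.subC m v x C, D => Ctx.subC m v x (comp C D)
  | Ctx.der e x C, D => Ctx.der e x (comp C D)


/-- Multiplicative values: multiplicative variables and abstractions. -/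
def IsMulVal : Term → Prop
  | Term.var (EVar.mul _) => True
  | Term.lam _ _ => True
  | _ => False

/-- `dfv` of a composition depends only on `dfv` of the inner context. -/
lemma dfv_comp_congr (C : Ctx) {D D' : Ctx} (h : dfv D = dfv D') :
    dfv (comp C D) = dfv (comp C D') := by
  induction C <;> simp [comp, dfv, *]

-- A good composed context has a good inner context.
mutual
lemma goodV_comp_inner : ∀ (C E : Ctx), GoodV (comp C E) → Good E
  | Ctx.hole, E, h => Good.val h
  | Ctx.lam x C, E, h => by
      cases h with
      | lam _ hg => exact good_comp_inner C E hg
  | Ctx.bang C, E, h => by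
      cases h with
      | bang hg => exact good_comp_inner C E hg
  | Ctx.cutT _ _ _, E, h => by cases h
  | Ctx.cutC _ _ _, E, h => by cases h
  | Ctx.subV _ _ _ _, E, h => by cases h
  | Ctx.subC _ _ _ _, E, h => by cases h
  | Ctx.der _ _ _, E, h => by cases h

lemma good_comp_inner : ∀ (C E : Ctx), Good (comp C E) → Good E
  | Ctx.hole, E, h => h
  | Ctx.lam x C, E, h => by
      cases h with
      | val hv => exact goodV_comp_inner (Ctx.lam x C) E hv
  | Ctx.bang C, E, h => by
      cases h with
      | val hv => exact goodV_comp_inner (Ctx.bang C) E hv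
  | Ctx.cutT C x t, E, h => by cases h with | val hv => cases hv
  | Ctx.cutC v x C, E, h => by
      cases h with
      | val hv => cases hv
      | cutC _ _ hg _ => exact good_comp_inner C E hg
  | Ctx.subV m C x t, E, h => by
      cases h with
      | val hv => cases hv
      | subV _ _ _ hv => exact goodV_comp_inner C E hv
  | Ctx.subC m v x C, E, h => by
      cases h with
      | val hv => cases hv
      | subC _ _ _ hg => exact good_comp_inner C E hg
  | Ctx.der e x C, E, h => by
      cases h with
      | val hv => cases hv
      | der _ _ hg => exact good_comp_inner C E hg
end

mutual
lemma prune_goodV (v : Term) (y : EVar) (D : Ctx) (hdfv : dfv (Ctx.cutC v y D) = dfv D) :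
    ∀ C : Ctx, GoodV (comp C (Ctx.cutC v y D)) → GoodV (comp C D)
  | Ctx.hole, h => by cases h
  | Ctx.lam x C, h => by
      cases h with
      | lam _ hg => exact GoodV.lam x (prune_good v y D hdfv C hg)
  | Ctx.bang C, h => by
      cases h with
      | bang hg => exact GoodV.bang (prune_good v y D hdfv C hg)
  | Ctx.cutT _ _ _, h => by cases h
  | Ctx.cutC _ _ _, h => by cases h
  | Ctx.subV _ _ _ _, h => by cases h
  | Ctx.subC _ _ _ _, h => by cases h
  | Ctx.der _ _ _, h => by cases h

lemma prune_good (v : Term) (y : EVar) (D : Ctx) (hdfv : dfv (Ctx.cutC v y D) = dfv D) :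
    ∀ C : Ctx, Good (comp C (Ctx.cutC v y D)) → Good (comp C D)
  | Ctx.hole, h => by
      cases h with
      | val hv => cases hv
      | cutC _ _ hg _ => exact hg
  | Ctx.lam x C, h => by
      cases h with
      | val hv => exact Good.val (prune_goodV v y D hdfv (Ctx.lam x C) hv)
  | Ctx.bang C, h => by
      cases h with
      | val hv => exact Good.val (prune_goodV v y D hdfv (Ctx.bang C) hv)
  | Ctx.cutT C x t, h => by cases h with | val hv => cases hv
  | Ctx.cutC w x C, h => by
      cases h with
      | val hv => cases hv
      | cutC _ _ hg hx =>
          exact Good.cutC w x (prune_good v y D hdfv C hg)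
            (by rwa [← dfv_comp_congr C hdfv])
  | Ctx.subV m C x t, h => by
      cases h with
      | val hv => cases hv
      | subV _ _ _ hv => exact Good.subV m x t (prune_goodV v y D hdfv C hv)
  | Ctx.subC m w x C, h => by
      cases h with
      | val hv => cases hv
      | subC _ _ _ hg => exact Good.subC m w x (prune_good v y D hdfv C hg)
  | Ctx.der e x C, h => by
      cases h with
      | val hv => cases hv
      | der _ _ hg => exact Good.der e x (prune_good v y D hdfv C hg)
end

/-- Linear pruning of good contexts: if `C⟨[vₘ→m]D⟩` is good, where `vₘ` is a
multiplicative value and `m` a multiplicative variable, then `C⟨D⟩` is good. -/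
theorem good_ctx_linear_pruning (C D : Ctx) (vm : Term) (n : ℕ)
    (hval : IsMulVal vm)
    (hgood : Good (comp C (Ctx.cutC vm (EVar.mul n) D))) :
    Good (comp C D) := by
  have hE : Good (Ctx.cutC vm (EVar.mul n) D) :=
    good_comp_inner C _ hgood
  have hnd : (EVar.mul n) ∉ dfv D := by
    cases hE with
    | val hv => cases hv
    | cutC _ _ _ hx => exact hx
  have hdfv : dfv (Ctx.cutC vm (EVar.mul n) D) = dfv D := by
    simp [dfv, Finset.sdiff_eq_self_iff_disjoint, Finset.disjoint_singleton_right, hnd]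
  exact prune_good vm (EVar.mul n) D hdfv C hgood
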